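/- Let g ∈ L¹(ℝ^d) and let L_k > 0 for each positive integer k. Define 𝒫(g, 𝓛, ℝ^d) to be the set of continuous functions p : ℝ^d → [0,∞) such that p ≤ g almost everywhere, ∫ p = 1, and for every positive integer k, p restricted to the closed Euclidean ball B_k(0) of radius k is L_k-Lipschitz. Then 𝒫(g, 𝓛, ℝ^d) is convex, and it is sequentially compact in L¹: every sequence (p_n) in 𝒫(g, 𝓛, ℝ^d) has a subsequence converging in L¹ norm (and almost everywhere) to some element of 𝒫(g, 𝓛, ℝ^d). -/

import Mathlib

open MeasureTheory Real Filter

noncomputable section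

abbrev E (d : ℕ) := EuclideanSpace ℝ (Fin d)

/-- Membership in the family `𝒫(g, 𝓛, ℝ^d)`: continuous nonnegative functions
dominated a.e. by `g`, integrating to one, and `L_k`-Lipschitz on each ball
of radius `k`. -/
def memP {d : ℕ} (g : E d → ℝ) (L : ℕ → ℝ) (p : E d → ℝ) : Prop :=
  Continuous p ∧ (∀ θ, 0 ≤ p θ) ∧ (∀ᵐ θ : E d, p θ ≤ g θ) ∧ (∫ θ, p θ = 1) ∧
    ∀ k : ℕ, 1 ≤ k → ∀ x y : E d, ‖x‖ ≤ (k : ℝ) → ‖y‖ ≤ (k : ℝ) →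
      |p x - p y| ≤ L k * ‖x - y‖

lemma memP.integrable {d : ℕ} {g : E d → ℝ} {L : ℕ → ℝ} {p : E d → ℝ}
    (hg : Integrable g) (hp : memP g L p) : Integrable p := by
  refine hg.mono hp.1.aestronglyMeasurable ?_
  filter_upwards [hp.2.2.1] with θ h
  rw [Real.norm_eq_abs, Real.norm_eq_abs, abs_of_nonneg (hp.2.1 θ)]
  exact h.trans (le_abs_self _)

lemma memP.bound {d : ℕ} {g : E d → ℝ} {L : ℕ → ℝ} {p : E d → ℝ}
    (hg : Integrable g) (hL : ∀ k, 1 ≤ k → 0 < L k) (hp : memP g L p) (x : E d) :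
    p x ≤ L (⌈‖x‖⌉₊ + 1) + ((volume (Metric.closedBall (0 : E d) 1)).toReal)⁻¹ := by
  obtain ⟨hc, h0, hle, hi, hlip⟩ := hp
  have hpInt : Integrable p := memP.integrable hg ⟨hc, h0, hle, hi, hlip⟩
  set k := ⌈‖x‖⌉₊ + 1 with hk
  have hk1 : 1 ≤ k := Nat.le_add_left 1 _
  have hxc : ‖x‖ ≤ (⌈‖x‖⌉₊ : ℝ) := Nat.le_ceil _
  have hxk : ‖x‖ ≤ (k : ℝ) := by push_cast [hk]; linarith
  have hLk := hL k hk1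
  have hball : ∀ y ∈ Metric.closedBall x 1, p x - L k ≤ p y := by
    intro y hy
    have hxy : ‖x - y‖ ≤ 1 := by
      rw [← dist_eq_norm, dist_comm]
      exact Metric.mem_closedBall.1 hy
    have hyk : ‖y‖ ≤ (k : ℝ) := by
      have h1 := norm_sub_norm_le y x
      have h2 : ‖y - x‖ = ‖x - y‖ := norm_sub_rev _ _
      push_cast [hk]
      linarith
    have h := hlip k hk1 x y hxk hyk
    nlinarith [le_abs_self (p x - p y), mul_le_mul_of_nonneg_left hxy hLk.le]
  have hvne : volume (Metric.closedBall x 1) ≠ ⊤ :=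
    (IsCompact.measure_lt_top (isCompact_closedBall x 1)).ne
  have key := setIntegral_ge_of_const_le measurableSet_closedBall hvne hball
    hpInt.integrableOn
  have hle1 : ∫ y in Metric.closedBall x 1, p y ≤ 1 := by
    rw [← hi]
    exact setIntegral_le_integral hpInt (Eventually.of_forall h0)
  have hvpos : 0 < (volume (Metric.closedBall x 1)).toReal :=
    ENNReal.toReal_pos (Metric.measure_closedBall_pos _ x one_pos).ne' hvne
  have hvc : (volume (Metric.closedBall x 1)).toReal
      = (volume (Metric.closedBall (0 : E d) 1)).toReal := by
    rw [Measure.addHaar_closedBall_center]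
  rw [measureReal_def, smul_eq_mul, mul_comm, hvc] at key
  rw [hvc] at hvpos
  have h2 : p x - L k ≤ 1 / (volume (Metric.closedBall (0 : E d) 1)).toReal :=
    (le_div_iff₀ hvpos).2 (key.trans hle1)
  rw [one_div] at h2
  linarith

lemma convex_part (d : ℕ) (g : E d → ℝ) (hg : Integrable g) (L : ℕ → ℝ)
    (p q : E d → ℝ) (hp : memP g L p) (hq : memP g L q)
    (a b : ℝ) (ha : 0 ≤ a) (hb : 0 ≤ b) (hab : a + b = 1) :
    memP g L (fun θ => a * p θ + b * q θ) := by
  obtain ⟨hpc, hp0, hpg, hpi, hpl⟩ := hp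
  obtain ⟨hqc, hq0, hqg, hqi, hql⟩ := hq
  have hpInt : Integrable p := memP.integrable hg ⟨hpc, hp0, hpg, hpi, hpl⟩
  have hqInt : Integrable q := memP.integrable hg ⟨hqc, hq0, hqg, hqi, hql⟩
  refine ⟨(continuous_const.mul hpc).add (continuous_const.mul hqc),
    fun θ => add_nonneg (mul_nonneg ha (hp0 θ)) (mul_nonneg hb (hq0 θ)), ?_, ?_, ?_⟩
  · filter_upwards [hpg, hqg] with θ h1 h2
    calc a * p θ + b * q θ ≤ a * g θ + b * g θ :=
          add_le_add (mul_le_mul_of_nonneg_left h1 ha) (mul_le_mul_of_nonneg_left h2 hb)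
      _ = g θ := by rw [← add_mul, hab, one_mul]
  · rw [integral_add (hpInt.const_mul a) (hqInt.const_mul b), MeasureTheory.integral_const_mul,
      MeasureTheory.integral_const_mul, hpi, hqi, mul_one, mul_one, hab]
  · intro k hk x y hx hy
    have h1 := hpl k hk x y hx hy
    have h2 := hql k hk x y hx hy
    calc |a * p x + b * q x - (a * p y + b * q y)|
        = |a * (p x - p y) + b * (q x - q y)| := by ring_nf
      _ ≤ |a * (p x - p y)| + |b * (q x - q y)| := abs_add_le _ _
      _ = a * |p x - p y| + b * |q x - q y| := by
          rw [abs_mul, abs_mul, abs_of_nonneg ha, abs_of_nonneg hb]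
      _ ≤ a * (L k * ‖x - y‖) + b * (L k * ‖x - y‖) :=
          add_le_add (mul_le_mul_of_nonneg_left h1 ha) (mul_le_mul_of_nonneg_left h2 hb)
      _ = L k * ‖x - y‖ := by rw [← add_mul, hab, one_mul]

lemma compact_part (d : ℕ) (g : E d → ℝ) (hg : Integrable g)
    (L : ℕ → ℝ) (hL : ∀ k, 1 ≤ k → 0 < L k)
    (pseq : ℕ → E d → ℝ) (hP : ∀ j, memP g L (pseq j)) :
    ∃ plim : E d → ℝ, memP g L plim ∧
      ∃ φ : ℕ → ℕ, StrictMono φ ∧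
        Tendsto (fun j => ∫ θ, |pseq (φ j) θ - plim θ|) atTop (nhds 0) ∧
        ∀ᵐ θ : E d, Tendsto (fun j => pseq (φ j) θ) atTop (nhds (plim θ)) := by
  classical
  set C : E d → ℝ := fun x =>
    L (⌈‖x‖⌉₊ + 1) + ((volume (Metric.closedBall (0 : E d) 1)).toReal)⁻¹ with hC
  have hbound : ∀ j x, pseq j x ∈ Set.Icc 0 (C x) := fun j x =>
    ⟨(hP j).2.1 x, memP.bound hg hL (hP j) x⟩
  -- dense sequence
  set u : ℕ → E d := TopologicalSpace.denseSeq (E d) with hu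
  have hdense : DenseRange u := TopologicalSpace.denseRange_denseSeq (E d)
  -- sequential compactness of the product of intervals
  have hKc : IsCompact (Set.univ.pi fun n : ℕ => Set.Icc (0 : ℝ) (C (u n))) :=
    isCompact_univ_pi fun n => isCompact_Icc
  have hmem : ∀ j, (fun n => pseq j (u n)) ∈ Set.univ.pi fun n : ℕ => Set.Icc (0 : ℝ) (C (u n)) :=
    fun j => by
      intro n _
      exact hbound j (u n)
  obtain ⟨q, hqK, φ, hφ, hconv⟩ := hKc.isSeqCompact hmem
  have hptwise : ∀ n, Tendsto (fun j => pseq (φ j) (u n)) atTop (nhds (q n)) := by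
    intro n
    exact (tendsto_pi_nhds.1 hconv n)
  -- Cauchy at every point
  have hcauchy : ∀ x : E d, CauchySeq fun j => pseq (φ j) x := by
    intro x
    rw [Metric.cauchySeq_iff]
    intro ε hε
    set k := ⌈‖x‖⌉₊ + 1 with hk
    have hk1 : 1 ≤ k := Nat.le_add_left 1 _
    have hLk := hL k hk1
    have hxc : ‖x‖ ≤ (⌈‖x‖⌉₊ : ℝ) := Nat.le_ceil _
    have hxk : ‖x‖ ≤ (k : ℝ) := by push_cast [hk]; linarith
    have hδ : 0 < min 1 (ε / (4 * L k)) := lt_min one_pos (by positivity)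
    obtain ⟨n, hn⟩ := hdense.exists_dist_lt x hδ
    have hdist1 : dist x (u n) ≤ 1 := hn.le.trans (min_le_left _ _)
    have hdist2 : dist x (u n) ≤ ε / (4 * L k) := hn.le.trans (min_le_right _ _)
    have hunk : ‖u n‖ ≤ (k : ℝ) := by
      have h1 := norm_sub_norm_le (u n) x
      have h2 : ‖u n - x‖ = dist x (u n) := by rw [dist_comm, dist_eq_norm]
      push_cast [hk]
      linarith
    -- Lipschitz control of each term
    have hlipx : ∀ j, |pseq j x - pseq j (u n)| ≤ ε / 4 := by
      intro j
      have h := (hP j).2.2.2.2 k hk1 x (u n) hxk hunk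
      have hxy : ‖x - u n‖ = dist x (u n) := (dist_eq_norm x (u n)).symm
      have : L k * ‖x - u n‖ ≤ ε / 4 := by
        rw [hxy]
        calc L k * dist x (u n) ≤ L k * (ε / (4 * L k)) :=
              mul_le_mul_of_nonneg_left hdist2 hLk.le
          _ = ε / 4 := by field_simp
      linarith
    obtain ⟨N, hN⟩ := Metric.cauchySeq_iff.1 (hptwise n).cauchySeq (ε / 2) (by positivity)
    refine ⟨N, fun i hi j hj => ?_⟩
    have h1 := hlipx (φ i)
    have h2 := hlipx (φ j)
    have h3 := hN i hi j hj
    have e1 : dist (pseq (φ i) x) (pseq (φ j) x) ≤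
        |pseq (φ i) x - pseq (φ i) (u n)| + dist (pseq (φ i) (u n)) (pseq (φ j) (u n))
          + |pseq (φ j) x - pseq (φ j) (u n)| := by
      rw [Real.dist_eq, Real.dist_eq]
      have := abs_sub_abs_le_abs_sub (pseq (φ i) x) (pseq (φ j) x)
      calc |pseq (φ i) x - pseq (φ j) x|
          = |(pseq (φ i) x - pseq (φ i) (u n)) + (pseq (φ i) (u n) - pseq (φ j) (u n))
              + (pseq (φ j) (u n) - pseq (φ j) x)| := by ring_nf
        _ ≤ _ := by
            refine (abs_add_le _ _).trans ?_
            have := abs_add_le (pseq (φ i) x - pseq (φ i) (u n))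
              (pseq (φ i) (u n) - pseq (φ j) (u n))
            rw [abs_sub_comm (pseq (φ j) (u n)) (pseq (φ j) x)]
            linarith
    linarith
  choose plim htend using fun x => cauchySeq_tendsto_of_complete (hcauchy x)
  -- properties of the limit
  have h0 : ∀ x, 0 ≤ plim x := fun x =>
    ge_of_tendsto' (htend x) fun j => (hP (φ j)).2.1 x
  have hlip : ∀ k : ℕ, 1 ≤ k → ∀ x y : E d, ‖x‖ ≤ (k : ℝ) → ‖y‖ ≤ (k : ℝ) →
      |plim x - plim y| ≤ L k * ‖x - y‖ := by
    intro k hk x y hx hy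
    have ht : Tendsto (fun j => |pseq (φ j) x - pseq (φ j) y|) atTop
        (nhds |plim x - plim y|) := ((htend x).sub (htend y)).abs
    exact le_of_tendsto ht (Eventually.of_forall fun j =>
      (hP (φ j)).2.2.2.2 k hk x y hx hy)
  have hcontlim : Continuous plim := by
    rw [continuous_iff_continuousAt]
    intro x
    set k := ⌈‖x‖⌉₊ + 1 with hk
    have hk1 : 1 ≤ k := Nat.le_add_left 1 _
    have hxc : ‖x‖ ≤ (⌈‖x‖⌉₊ : ℝ) := Nat.le_ceil _
    have hxlt : ‖x‖ < (k : ℝ) := by push_cast [hk]; linarith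
    have hlips : LipschitzOnWith (Real.toNNReal (L k)) plim (Metric.closedBall 0 (k : ℝ)) := by
      rw [lipschitzOnWith_iff_dist_le_mul]
      intro a ha b hb
      rw [Real.dist_eq, dist_eq_norm]
      calc |plim a - plim b| ≤ L k * ‖a - b‖ :=
            hlip k hk1 a b (mem_closedBall_zero_iff.1 ha) (mem_closedBall_zero_iff.1 hb)
        _ = (Real.toNNReal (L k) : ℝ) * ‖a - b‖ := by
            rw [Real.coe_toNNReal _ (hL k hk1).le]
    refine (hlips.continuousOn).continuousAt ?_
    exact Metric.closedBall_mem_nhds_of_mem (by simpa [mem_ball_zero_iff] using hxlt)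
  have hg_ae : ∀ᵐ θ : E d, ∀ j, pseq j θ ≤ g θ := ae_all_iff.2 fun j => (hP j).2.2.1
  have hlim_le : ∀ᵐ θ : E d, plim θ ≤ g θ := by
    filter_upwards [hg_ae] with θ h
    exact le_of_tendsto (htend θ) (Eventually.of_forall fun j => h (φ j))
  -- integral of limit is 1
  have hdom : Tendsto (fun j => ∫ θ, pseq (φ j) θ) atTop (nhds (∫ θ, plim θ)) := by
    refine tendsto_integral_of_dominated_convergence (fun θ => |g θ|)
      (fun j => (hP (φ j)).1.aestronglyMeasurable) hg.abs ?_ ?_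
    · intro j
      filter_upwards [(hP (φ j)).2.2.1] with θ h
      rw [Real.norm_eq_abs, abs_of_nonneg ((hP (φ j)).2.1 θ)]
      exact h.trans (le_abs_self _)
    · exact Eventually.of_forall fun θ => htend θ
  have hint1 : ∫ θ, plim θ = 1 := by
    have h1 : Tendsto (fun j => ∫ θ, pseq (φ j) θ) atTop (nhds 1) := by
      have : (fun j => ∫ θ, pseq (φ j) θ) = fun _ => (1 : ℝ) := by
        funext j; exact (hP (φ j)).2.2.2.1
      rw [this]; exact tendsto_const_nhds
    exact (tendsto_nhds_unique hdom h1)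
  -- L¹ convergence
  have hL1 : Tendsto (fun j => ∫ θ, |pseq (φ j) θ - plim θ|) atTop (nhds 0) := by
    have h := tendsto_integral_of_dominated_convergence (μ := volume)
      (F := fun j θ => |pseq (φ j) θ - plim θ|) (f := fun _ => (0 : ℝ))
      (fun θ => 2 * |g θ|)
      (fun j => (((hP (φ j)).1.sub hcontlim).abs).aestronglyMeasurable)
      (hg.abs.const_mul 2) ?_ ?_
    · simpa using h
    · intro j
      filter_upwards [(hP (φ j)).2.2.1, hlim_le] with θ h1 h2
      have hp0 := (hP (φ j)).2.1 θ
      have hl0 := h0 θ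
      have habs := abs_sub (pseq (φ j) θ) (plim θ)
      rw [Real.norm_eq_abs, abs_abs]
      have hga := le_abs_self (g θ)
      rw [abs_of_nonneg hp0, abs_of_nonneg hl0] at habs
      linarith
    · refine Eventually.of_forall fun θ => ?_
      have h2 : Tendsto (fun _ : ℕ => plim θ) atTop (nhds (plim θ)) := tendsto_const_nhds
      have := ((htend θ).sub h2).abs
      simpa using this
  exact ⟨plim, ⟨hcontlim, h0, hlim_le, hint1, hlip⟩, φ, hφ, hL1,
    Eventually.of_forall fun θ => htend θ⟩

/-- The set `𝒫(g, 𝓛, ℝ^d)` is convex and sequentially compact in `L¹`: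
every sequence in it has a subsequence converging in `L¹` norm and almost
everywhere to an element of the set. -/
theorem P_convex_and_compact (d : ℕ) (g : E d → ℝ) (hg : Integrable g)
    (L : ℕ → ℝ) (hL : ∀ k, 1 ≤ k → 0 < L k) :
    (∀ p q : E d → ℝ, memP g L p → memP g L q →
      ∀ a b : ℝ, 0 ≤ a → 0 ≤ b → a + b = 1 →
        memP g L (fun θ => a * p θ + b * q θ)) ∧
    (∀ pseq : ℕ → E d → ℝ, (∀ j, memP g L (pseq j)) →
      ∃ plim : E d → ℝ, memP g L plim ∧
        ∃ φ : ℕ → ℕ, StrictMono φ ∧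
          Tendsto (fun j => ∫ θ, |pseq (φ j) θ - plim θ|) atTop (nhds 0) ∧
          ∀ᵐ θ : E d, Tendsto (fun j => pseq (φ j) θ) atTop (nhds (plim θ))) := by
  refine ⟨fun p q hp hq a b ha hb hab => convex_part d g hg L p q hp hq a b ha hb hab,
    fun pseq hP => compact_part d g hg L hL pseq hP⟩
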